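/- arXiv:2604.10482 — 6 statements merged into one kernel-verified Lean document; each statement's English description precedes it below -/
import Mathlib

section
/- Under the stated assumptions, the Fréchet correlation coefficient satisfies 0 ≤ ρ ≤ 1. -/
open MeasureTheory ProbabilityTheory Bornology Filter


open MeasureTheory in
private lemma bounded_integrable {α : Type*} [MeasurableSpace α] (m : Measure α)
    [IsProbabilityMeasure m] {f : α → ℝ} (hf : AEStronglyMeasurable f m) {C : ℝ}
    (h : ∀ a, ‖f a‖ ≤ C) : Integrable f m :=
  (integrable_const C).mono' hf (ae_of_all _ h)

/-- Proposition 1 of the paper.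
Let `X : Ω → 𝓧` and `Y : Ω → 𝓨` be random elements of bounded, complete, separable metric
spaces, let `κ` be a regular conditional distribution of `Y` given `X`, let `μF` be the
(unique) global Fréchet mean of `Y` with Fréchet variance `VF > 0`, and let `μFx x` be the
(unique, `P_X`-a.e.) conditional Fréchet mean of `Y` given `X = x` with conditional Fréchet
variance `V x`.  Then the Fréchet correlation coefficient
`ρ = 1 - E[V(X)] / VF` satisfies `0 ≤ ρ ≤ 1`. -/
theorem frechet_correlation_coefficient_mem_unit_interval
    {Ω 𝓧 𝓨 : Type*} [MeasurableSpace Ω]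
    [MetricSpace 𝓧] [CompleteSpace 𝓧] [TopologicalSpace.SeparableSpace 𝓧]
    [MeasurableSpace 𝓧] [BorelSpace 𝓧]
    [MetricSpace 𝓨] [CompleteSpace 𝓨] [TopologicalSpace.SeparableSpace 𝓨]
    [MeasurableSpace 𝓨] [BorelSpace 𝓨]
    (hbX : IsBounded (Set.univ : Set 𝓧)) (hbY : IsBounded (Set.univ : Set 𝓨))
    (μ : Measure Ω) [IsProbabilityMeasure μ]
    (X : Ω → 𝓧) (Y : Ω → 𝓨) (hX : Measurable X) (hY : Measurable Y)
    -- `κ` is a regular conditional distribution of `Y` given `X`: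
    (κ : Kernel 𝓧 𝓨) [IsMarkovKernel κ]
    (hκ : Measure.map (fun ω => (X ω, Y ω)) μ = (Measure.map X μ).compProd κ)
    -- the global Fréchet mean exists and is unique:
    (μF : 𝓨)
    (hμF_min : ∀ z : 𝓨, (∫ ω, dist (Y ω) μF ^ 2 ∂μ) ≤ ∫ ω, dist (Y ω) z ^ 2 ∂μ)
    (hμF_uniq : ∀ z : 𝓨, ((∫ ω, dist (Y ω) z ^ 2 ∂μ) ≤ ∫ ω, dist (Y ω) μF ^ 2 ∂μ) → z = μF)
    -- the conditional Fréchet mean exists, is unique `P_X`-a.e., and is measurable in `x`: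
    (μFx : 𝓧 → 𝓨) (hμFx_meas : Measurable μFx)
    (hμFx_min : ∀ᵐ x ∂(Measure.map X μ), ∀ z : 𝓨,
      (∫ y, dist y (μFx x) ^ 2 ∂(κ x)) ≤ ∫ y, dist y z ^ 2 ∂(κ x))
    (hμFx_uniq : ∀ᵐ x ∂(Measure.map X μ), ∀ z : 𝓨,
      ((∫ y, dist y z ^ 2 ∂(κ x)) ≤ ∫ y, dist y (μFx x) ^ 2 ∂(κ x)) → z = μFx x)
    -- the Fréchet variance, assumed strictly positive:
    (VF : ℝ) (hVF : VF = ∫ ω, dist (Y ω) μF ^ 2 ∂μ) (hVF_pos : 0 < VF)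
    -- the conditional Fréchet variance:
    (V : 𝓧 → ℝ) (hV : ∀ x, V x = ∫ y, dist y (μFx x) ^ 2 ∂(κ x))
    -- the Fréchet correlation coefficient:
    (ρ : ℝ) (hρ : ρ = 1 - (∫ x, V x ∂(Measure.map X μ)) / VF) :
    0 ≤ ρ ∧ ρ ≤ 1 := by
  set ν := Measure.map X μ with hν
  have hνprob : IsProbabilityMeasure ν := Measure.isProbabilityMeasure_map hX.aemeasurable
  obtain ⟨C, hC⟩ := Metric.isBounded_iff.mp hbY
  have hC' : ∀ y z : 𝓨, ‖dist y z ^ 2‖ ≤ C ^ 2 := fun y z => by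
    rw [Real.norm_eq_abs, abs_of_nonneg (by positivity)]
    exact pow_le_pow_left₀ dist_nonneg (hC trivial trivial) 2
  -- V is nonnegative
  have hV0 : ∀ x, 0 ≤ V x := fun x => (hV x) ▸ integral_nonneg fun y => by positivity
  -- measurability of V and of g x := ∫ y, dist y μF ^ 2 ∂κ x
  have hVeq : V = fun x => ∫ y, dist y (μFx x) ^ 2 ∂(κ x) := funext hV
  have hmV : StronglyMeasurable V := by
    rw [hVeq]
    exact (((measurable_snd.dist (hμFx_meas.comp measurable_fst)).pow_const
      2).stronglyMeasurable (f := fun p : 𝓧 × 𝓨 => dist p.2 (μFx p.1) ^ 2)).integral_kernel_prod_right'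
  set g : 𝓧 → ℝ := fun x => ∫ y, dist y μF ^ 2 ∂(κ x) with hg
  have hmg : StronglyMeasurable g :=
    (((measurable_snd.dist measurable_const).pow_const
      2).stronglyMeasurable (f := fun p : 𝓧 × 𝓨 => dist p.2 μF ^ 2)).integral_kernel_prod_right'
  -- integrability
  have hVint : Integrable V ν := by
    refine bounded_integrable ν hmV.aestronglyMeasurable (C := C ^ 2) fun x => ?_
    rw [Real.norm_eq_abs, abs_of_nonneg (hV0 x), hV x]
    calc ∫ y, dist y (μFx x) ^ 2 ∂(κ x) ≤ ∫ _, C ^ 2 ∂(κ x) :=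
          integral_mono (bounded_integrable _ (((measurable_id.dist
            measurable_const).pow_const 2).aestronglyMeasurable) (hC' · (μFx x)))
            (integrable_const _) fun y => by
              have := hC' y (μFx x); rwa [Real.norm_eq_abs, abs_of_nonneg (by positivity)] at this
      _ = C ^ 2 := by simp
  have hgint : Integrable g ν := by
    refine bounded_integrable ν hmg.aestronglyMeasurable (C := C ^ 2) fun x => ?_
    rw [Real.norm_eq_abs, abs_of_nonneg (integral_nonneg fun y => by positivity)]
    calc ∫ y, dist y μF ^ 2 ∂(κ x) ≤ ∫ _, C ^ 2 ∂(κ x) :=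
          integral_mono (bounded_integrable _ (((measurable_id.dist
            measurable_const).pow_const 2).aestronglyMeasurable) (hC' · μF))
            (integrable_const _) fun y => by
              have := hC' y μF; rwa [Real.norm_eq_abs, abs_of_nonneg (by positivity)] at this
      _ = C ^ 2 := by simp
  -- VF as an integral of g
  have hVFg : VF = ∫ x, g x ∂ν := by
    rw [hVF]
    have hmeas : Measurable fun p : 𝓧 × 𝓨 => dist p.2 μF ^ 2 :=
      (measurable_snd.dist measurable_const).pow_const 2
    have h1 : ∫ ω, dist (Y ω) μF ^ 2 ∂μ
        = ∫ p : 𝓧 × 𝓨, dist p.2 μF ^ 2 ∂(Measure.map (fun ω => (X ω, Y ω)) μ) :=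
      (integral_map (hX.prodMk hY).aemeasurable hmeas.aestronglyMeasurable).symm
    have hint2 : Integrable (fun p : 𝓧 × 𝓨 => dist p.2 μF ^ 2) (ν.compProd κ) := by
      have : IsProbabilityMeasure (ν.compProd κ) := by infer_instance
      exact bounded_integrable _ hmeas.aestronglyMeasurable fun p => hC' p.2 μF
    rw [h1, hκ, Measure.integral_compProd hint2]
  -- the key inequality ∫ V ≤ VF
  have hkey : ∫ x, V x ∂ν ≤ VF := by
    rw [hVFg]
    refine integral_mono_ae hVint hgint ?_
    filter_upwards [hμFx_min] with x hx
    rw [hV x]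
    exact hx μF
  have hVnn : 0 ≤ ∫ x, V x ∂ν := integral_nonneg hV0
  constructor
  · rw [hρ, sub_nonneg, div_le_one hVF_pos]
    exact hkey
  · rw [hρ]
    have : 0 ≤ (∫ x, V x ∂ν) / VF := div_nonneg hVnn hVF_pos.le
    linarith
end

section
/- ρ = 1 if and only if there exists a measurable map f : 𝓧 → 𝓨 such that Y = f(X) almost surely; and in that case f(X) = μ_{F,X} almost surely. -/
open MeasureTheory ProbabilityTheory Bornology Filter

/-- Theorem 1 of the paper.
`ρ = 1` if and only if there exists a measurable map `f : 𝓧 → 𝓨` such that `Y = f (X)`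
almost surely; and in that case `f (X) = μFx (X)` almost surely. -/
theorem frechet_correlation_coefficient_eq_one_iff
    {Ω 𝓧 𝓨 : Type*} [MeasurableSpace Ω]
    [MetricSpace 𝓧] [CompleteSpace 𝓧] [TopologicalSpace.SeparableSpace 𝓧]
    [MeasurableSpace 𝓧] [BorelSpace 𝓧]
    [MetricSpace 𝓨] [CompleteSpace 𝓨] [TopologicalSpace.SeparableSpace 𝓨]
    [MeasurableSpace 𝓨] [BorelSpace 𝓨]
    (hbX : IsBounded (Set.univ : Set 𝓧)) (hbY : IsBounded (Set.univ : Set 𝓨))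
    (μ : Measure Ω) [IsProbabilityMeasure μ]
    (X : Ω → 𝓧) (Y : Ω → 𝓨) (hX : Measurable X) (hY : Measurable Y)
    -- `κ` is a regular conditional distribution of `Y` given `X`:
    (κ : Kernel 𝓧 𝓨) [IsMarkovKernel κ]
    (hκ : Measure.map (fun ω => (X ω, Y ω)) μ = (Measure.map X μ).compProd κ)
    -- the global Fréchet mean exists and is unique:
    (μF : 𝓨)
    (hμF_min : ∀ z : 𝓨, (∫ ω, dist (Y ω) μF ^ 2 ∂μ) ≤ ∫ ω, dist (Y ω) z ^ 2 ∂μ)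
    (hμF_uniq : ∀ z : 𝓨, ((∫ ω, dist (Y ω) z ^ 2 ∂μ) ≤ ∫ ω, dist (Y ω) μF ^ 2 ∂μ) → z = μF)
    -- the conditional Fréchet mean exists, is unique `P_X`-a.e., and is measurable in `x`:
    (μFx : 𝓧 → 𝓨) (hμFx_meas : Measurable μFx)
    (hμFx_min : ∀ᵐ x ∂(Measure.map X μ), ∀ z : 𝓨,
      (∫ y, dist y (μFx x) ^ 2 ∂(κ x)) ≤ ∫ y, dist y z ^ 2 ∂(κ x))
    (hμFx_uniq : ∀ᵐ x ∂(Measure.map X μ), ∀ z : 𝓨,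
      ((∫ y, dist y z ^ 2 ∂(κ x)) ≤ ∫ y, dist y (μFx x) ^ 2 ∂(κ x)) → z = μFx x)
    -- the Fréchet variance, assumed strictly positive:
    (VF : ℝ) (hVF : VF = ∫ ω, dist (Y ω) μF ^ 2 ∂μ) (hVF_pos : 0 < VF)
    -- the conditional Fréchet variance:
    (V : 𝓧 → ℝ) (hV : ∀ x, V x = ∫ y, dist y (μFx x) ^ 2 ∂(κ x))
    -- the Fréchet correlation coefficient:
    (ρ : ℝ) (hρ : ρ = 1 - (∫ x, V x ∂(Measure.map X μ)) / VF) :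
    (ρ = 1 ↔ ∃ f : 𝓧 → 𝓨, Measurable f ∧ ∀ᵐ ω ∂μ, Y ω = f (X ω)) ∧
    (∀ f : 𝓧 → 𝓨, Measurable f → (∀ᵐ ω ∂μ, Y ω = f (X ω)) →
      ∀ᵐ ω ∂μ, f (X ω) = μFx (X ω)) := by
  classical
  set P := Measure.map X μ with hPdef
  haveI : IsProbabilityMeasure P := Measure.isProbabilityMeasure_map hX.aemeasurable
  -- bound on distances in 𝓨
  obtain ⟨C, hC⟩ := Metric.isBounded_iff.mp hbY
  have hC' : ∀ y z : 𝓨, dist y z ≤ C := fun y z => hC (Set.mem_univ y) (Set.mem_univ z)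
  have hC0 : 0 ≤ C := le_trans dist_nonneg (hC' μF μF)
  -- integrability of squared distance functions
  have hdint : ∀ (ν : Measure 𝓨), IsFiniteMeasure ν → ∀ z : 𝓨,
      Integrable (fun y => dist y z ^ 2) ν := by
    intro ν hν z
    haveI := hν
    refine (integrable_const (C ^ 2)).mono' ?_ ?_
    · exact ((continuous_id.dist continuous_const).pow 2).aestronglyMeasurable
    · filter_upwards with y
      rw [Real.norm_of_nonneg (sq_nonneg _)]
      exact pow_le_pow_left₀ dist_nonneg (hC' y z) 2
  -- key disintegration lemma
  have key : ∀ (g : 𝓧 × 𝓨 → ENNReal), Measurable g →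
      ∫⁻ ω, g (X ω, Y ω) ∂μ = ∫⁻ x, ∫⁻ y, g (x, y) ∂(κ x) ∂P := by
    intro g hg
    rw [← lintegral_map hg (hX.prodMk hY), hκ, Measure.lintegral_compProd hg]
  -- characterization of Y = f (X) a.s.
  have hedist : ∀ f : 𝓧 → 𝓨, Measurable f →
      ((∀ᵐ ω ∂μ, Y ω = f (X ω)) ↔ ∀ᵐ x ∂P, ∀ᵐ y ∂(κ x), y = f x) := by
    intro f hf
    have hg : Measurable (fun p : 𝓧 × 𝓨 => edist p.2 (f p.1)) :=
      measurable_snd.edist (hf.comp measurable_fst)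
    have hkey := key _ hg
    have hmeasR : Measurable (fun x => ∫⁻ y, edist y (f x) ∂(κ x)) := by
      exact Measurable.lintegral_kernel_prod_right' (κ := κ) hg
    constructor
    · intro h
      have h0 : ∫⁻ ω, edist (Y ω) (f (X ω)) ∂μ = 0 := by
        have : (fun ω => edist (Y ω) (f (X ω))) =ᵐ[μ] 0 := by
          filter_upwards [h] with ω hω
          simp [hω]
        rw [lintegral_congr_ae this]; simp
      rw [hkey] at h0
      have h1 := (lintegral_eq_zero_iff hmeasR).mp h0
      filter_upwards [h1] with x hx
      have hm : Measurable (fun y : 𝓨 => edist y (f x)) :=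
        measurable_id.edist measurable_const
      have h2 := (lintegral_eq_zero_iff hm).mp hx
      filter_upwards [h2] with y hy
      exact edist_eq_zero.mp hy
    · intro h
      have h0 : ∫⁻ x, ∫⁻ y, edist y (f x) ∂(κ x) ∂P = 0 := by
        have : (fun x => ∫⁻ y, edist y (f x) ∂(κ x)) =ᵐ[P] 0 := by
          filter_upwards [h] with x hx
          have : (fun y => edist y (f x)) =ᵐ[κ x] 0 := by
            filter_upwards [hx] with y hy
            simp [hy]
          simp [lintegral_congr_ae this]
        rw [lintegral_congr_ae this]; simp
      rw [← hkey] at h0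
      have h1 := (lintegral_eq_zero_iff
        ((hY.comp measurable_id).edist (hf.comp (hX.comp measurable_id)))).mp h0
      filter_upwards [h1] with ω hω
      exact edist_eq_zero.mp hω
  -- pointwise characterization of V x = 0
  have hVnonneg : ∀ x, 0 ≤ V x := by
    intro x
    rw [hV x]
    exact integral_nonneg fun y => sq_nonneg _
  have hiff : ∀ x, V x = 0 ↔ ∀ᵐ y ∂(κ x), y = μFx x := by
    intro x
    rw [hV x, integral_eq_zero_iff_of_nonneg (fun y => sq_nonneg _)
      (hdint (κ x) inferInstance (μFx x))]
    constructor
    · intro h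
      filter_upwards [h] with y hy
      have : dist y (μFx x) ^ 2 = 0 := hy
      have := pow_eq_zero_iff (n := 2) (by norm_num) |>.mp this
      exact dist_eq_zero.mp this
    · intro h
      filter_upwards [h] with y hy
      simp [hy]
  -- measurability and integrability of V
  have hVmeas : Measurable V := by
    have : V = fun x => ∫ y, dist y (μFx x) ^ 2 ∂(κ x) := funext hV
    rw [this]
    have hsm : StronglyMeasurable (fun p : 𝓧 × 𝓨 => dist p.2 (μFx p.1) ^ 2) :=
      ((measurable_snd.dist (hμFx_meas.comp measurable_fst)).pow_const 2).stronglyMeasurable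
    exact (hsm.integral_kernel_prod_right' (κ := κ)).measurable
  have hVint : Integrable V P := by
    refine (integrable_const (C ^ 2)).mono' hVmeas.aestronglyMeasurable ?_
    filter_upwards with x
    rw [Real.norm_of_nonneg (hVnonneg x), hV x]
    calc ∫ y, dist y (μFx x) ^ 2 ∂(κ x) ≤ ∫ _, C ^ 2 ∂(κ x) := by
          refine integral_mono (hdint (κ x) inferInstance (μFx x)) (integrable_const _) ?_
          intro y
          exact pow_le_pow_left₀ dist_nonneg (hC' y (μFx x)) 2
      _ = C ^ 2 := by simp
  -- main equivalence for the integral of V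
  have hmain : (∫ x, V x ∂P) = 0 ↔ ∀ᵐ x ∂P, ∀ᵐ y ∂(κ x), y = μFx x := by
    rw [integral_eq_zero_iff_of_nonneg hVnonneg hVint]
    constructor
    · intro h
      filter_upwards [h] with x hx
      exact (hiff x).mp hx
    · intro h
      filter_upwards [h] with x hx
      exact (hiff x).mpr hx
  -- ρ = 1 ↔ ∫ V = 0
  have hρ1 : ρ = 1 ↔ (∫ x, V x ∂P) = 0 := by
    rw [hρ]
    constructor
    · intro h
      have : (∫ x, V x ∂P) / VF = 0 := by linarith
      rcases div_eq_zero_iff.mp this with h' | h'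
      · exact h'
      · exact absurd h' (ne_of_gt hVF_pos)
    · intro h
      rw [h]
      simp
  -- backward direction: any a.s. representation forces f = μFx a.e.
  have hback : ∀ f : 𝓧 → 𝓨, Measurable f → (∀ᵐ ω ∂μ, Y ω = f (X ω)) →
      ∀ᵐ x ∂P, f x = μFx x := by
    intro f hf h
    have h1 := (hedist f hf).mp h
    filter_upwards [h1, hμFx_uniq] with x hx huniq
    have hz : (∫ y, dist y (f x) ^ 2 ∂(κ x)) = 0 := by
      have : (fun y => dist y (f x) ^ 2) =ᵐ[κ x] 0 := by
        filter_upwards [hx] with y hy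
        simp [hy]
      rw [integral_congr_ae this]; simp
    refine huniq (f x) ?_
    rw [hz]
    exact integral_nonneg fun y => sq_nonneg _
  refine ⟨⟨?_, ?_⟩, ?_⟩
  · intro h
    refine ⟨μFx, hμFx_meas, ?_⟩
    exact (hedist μFx hμFx_meas).mpr (hmain.mp (hρ1.mp h))
  · rintro ⟨f, hf, h⟩
    refine hρ1.mpr (hmain.mpr ?_)
    have h1 := (hedist f hf).mp h
    have h2 := hback f hf h
    filter_upwards [h1, h2] with x hx heq
    filter_upwards [hx] with y hy
    rw [hy, heq]
  · intro f hf h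
    have h2 := hback f hf h
    exact ae_of_ae_map hX.aemeasurable h2
end

section
/- ρ = 0 if and only if μ_{F,X} = μ_F almost surely; in particular, if X and Y are independent, then ρ = 0. -/
open MeasureTheory ProbabilityTheory Bornology Filter

private lemma integrable_dist_sq_aux {α 𝓨 : Type*} [MeasurableSpace α] [MetricSpace 𝓨]
    [MeasurableSpace 𝓨] [BorelSpace 𝓨] [TopologicalSpace.SeparableSpace 𝓨]
    {ν : Measure α} [IsProbabilityMeasure ν] {f g : α → 𝓨} (hf : Measurable f)
    (hg : Measurable g) {C : ℝ} (hC : ∀ a b : 𝓨, dist a b ≤ C) :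
    Integrable (fun a => dist (f a) (g a) ^ 2) ν := by
  haveI : SecondCountableTopology 𝓨 := UniformSpace.secondCountable_of_separable 𝓨
  refine (integrable_const (C ^ 2)).mono' ?_ ?_
  · exact ((hf.dist hg).pow_const 2).aestronglyMeasurable
  · refine ae_of_all _ fun a => ?_
    rw [Real.norm_eq_abs, abs_of_nonneg (by positivity)]
    have h1 := hC (f a) (g a)
    nlinarith [dist_nonneg (x := f a) (y := g a)]

/-- Theorem 2 of the paper.
`ρ = 0` if and only if `μFx (X) = μF` almost surely; in particular, if `X` and `Y` are
independent then `ρ = 0`. -/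
theorem frechet_correlation_coefficient_eq_zero_iff
    {Ω 𝓧 𝓨 : Type*} [MeasurableSpace Ω]
    [MetricSpace 𝓧] [CompleteSpace 𝓧] [TopologicalSpace.SeparableSpace 𝓧]
    [MeasurableSpace 𝓧] [BorelSpace 𝓧]
    [MetricSpace 𝓨] [CompleteSpace 𝓨] [TopologicalSpace.SeparableSpace 𝓨]
    [MeasurableSpace 𝓨] [BorelSpace 𝓨]
    (hbX : IsBounded (Set.univ : Set 𝓧)) (hbY : IsBounded (Set.univ : Set 𝓨))
    (μ : Measure Ω) [IsProbabilityMeasure μ]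
    (X : Ω → 𝓧) (Y : Ω → 𝓨) (hX : Measurable X) (hY : Measurable Y)
    -- `κ` is a regular conditional distribution of `Y` given `X`:
    (κ : Kernel 𝓧 𝓨) [IsMarkovKernel κ]
    (hκ : Measure.map (fun ω => (X ω, Y ω)) μ = (Measure.map X μ).compProd κ)
    -- the global Fréchet mean exists and is unique:
    (μF : 𝓨)
    (hμF_min : ∀ z : 𝓨, (∫ ω, dist (Y ω) μF ^ 2 ∂μ) ≤ ∫ ω, dist (Y ω) z ^ 2 ∂μ)
    (hμF_uniq : ∀ z : 𝓨, ((∫ ω, dist (Y ω) z ^ 2 ∂μ) ≤ ∫ ω, dist (Y ω) μF ^ 2 ∂μ) → z = μF)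
    -- the conditional Fréchet mean exists, is unique `P_X`-a.e., and is measurable in `x`:
    (μFx : 𝓧 → 𝓨) (hμFx_meas : Measurable μFx)
    (hμFx_min : ∀ᵐ x ∂(Measure.map X μ), ∀ z : 𝓨,
      (∫ y, dist y (μFx x) ^ 2 ∂(κ x)) ≤ ∫ y, dist y z ^ 2 ∂(κ x))
    (hμFx_uniq : ∀ᵐ x ∂(Measure.map X μ), ∀ z : 𝓨,
      ((∫ y, dist y z ^ 2 ∂(κ x)) ≤ ∫ y, dist y (μFx x) ^ 2 ∂(κ x)) → z = μFx x)
    -- the Fréchet variance, assumed strictly positive: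
    (VF : ℝ) (hVF : VF = ∫ ω, dist (Y ω) μF ^ 2 ∂μ) (hVF_pos : 0 < VF)
    -- the conditional Fréchet variance:
    (V : 𝓧 → ℝ) (hV : ∀ x, V x = ∫ y, dist y (μFx x) ^ 2 ∂(κ x))
    -- the Fréchet correlation coefficient:
    (ρ : ℝ) (hρ : ρ = 1 - (∫ x, V x ∂(Measure.map X μ)) / VF) :
    (ρ = 0 ↔ ∀ᵐ ω ∂μ, μFx (X ω) = μF) ∧
    (IndepFun X Y μ → ρ = 0) := by
  haveI : Nonempty 𝓨 := ⟨μF⟩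
  set νX := Measure.map X μ with hνXdef
  haveI : IsProbabilityMeasure νX := Measure.isProbabilityMeasure_map hX.aemeasurable
  obtain ⟨C, hCb⟩ := Metric.isBounded_iff.mp hbY
  have hC : ∀ a b : 𝓨, dist a b ≤ C := fun a b => hCb trivial trivial
  -- the disintegration identity
  have hkey : ∀ (f : 𝓧 → 𝓨), Measurable f →
      ∫ ω, dist (Y ω) (f (X ω)) ^ 2 ∂μ = ∫ x, ∫ y, dist y (f x) ^ 2 ∂(κ x) ∂νX := by
    intro f hf
    have hmeas : Measurable (fun p : 𝓧 × 𝓨 => dist p.2 (f p.1) ^ 2) :=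
      (measurable_snd.dist (hf.comp measurable_fst)).pow_const 2
    have h1 : ∫ ω, dist (Y ω) (f (X ω)) ^ 2 ∂μ
        = ∫ p : 𝓧 × 𝓨, dist p.2 (f p.1) ^ 2 ∂(Measure.map (fun ω => (X ω, Y ω)) μ) := by
      rw [integral_map (hX.prodMk hY).aemeasurable hmeas.aestronglyMeasurable]
    rw [h1, hκ, Measure.integral_compProd]
    exact integrable_dist_sq_aux measurable_snd (hf.comp measurable_fst) hC
  -- the conditional variance with respect to the global mean
  set W : 𝓧 → ℝ := fun x => ∫ y, dist y μF ^ 2 ∂(κ x) with hWdef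
  have hVF' : VF = ∫ x, W x ∂νX := by
    rw [hVF, ← hkey (fun _ => μF) measurable_const]
  have hWmeas : StronglyMeasurable W :=
    ((measurable_snd.dist (measurable_const : Measurable fun _ : 𝓧 × 𝓨 => μF)).pow_const
      2).stronglyMeasurable.integral_kernel_prod_right'
  have hVmeas : StronglyMeasurable V := by
    have : V = fun x => ∫ y, dist y (μFx x) ^ 2 ∂(κ x) := funext hV
    rw [this]
    exact ((measurable_snd.dist
      (hμFx_meas.comp measurable_fst)).pow_const 2).stronglyMeasurable.integral_kernel_prod_right'
  have hbound : ∀ (g : 𝓧 → 𝓨) (x : 𝓧), ‖∫ y, dist y (g x) ^ 2 ∂(κ x)‖ ≤ C ^ 2 := by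
    intro g x
    rw [Real.norm_eq_abs, abs_of_nonneg (integral_nonneg fun y => by positivity)]
    calc ∫ y, dist y (g x) ^ 2 ∂(κ x) ≤ ∫ _, C ^ 2 ∂(κ x) := by
          refine integral_mono (integrable_dist_sq_aux measurable_id measurable_const hC)
            (integrable_const _) fun y => ?_
          have h1 := hC y (g x)
          nlinarith [dist_nonneg (x := y) (y := g x)]
      _ = C ^ 2 := by simp
  have hWint : Integrable W νX :=
    (integrable_const (C ^ 2)).mono' hWmeas.aestronglyMeasurable
      (ae_of_all _ fun x => hbound (fun _ => μF) x)
  have hVint : Integrable V νX :=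
    (integrable_const (C ^ 2)).mono' hVmeas.aestronglyMeasurable
      (ae_of_all _ fun x => by rw [hV]; exact hbound μFx x)
  have hVW : V ≤ᵐ[νX] W := by
    filter_upwards [hμFx_min] with x hx
    rw [hV]; exact hx μF
  have hρ0 : ρ = 0 ↔ ∫ x, V x ∂νX = VF := by
    rw [hρ, sub_eq_zero, eq_comm, div_eq_one_iff_eq hVF_pos.ne']
  -- the main equivalence over `νX`
  have hmain : ρ = 0 ↔ ∀ᵐ x ∂νX, μFx x = μF := by
    rw [hρ0]
    constructor
    · intro h
      have heq : V =ᵐ[νX] W := by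
        rw [← integral_eq_iff_of_ae_le hVint hWint hVW, h, hVF']
      filter_upwards [heq, hμFx_uniq] with x hx huniq
      exact (huniq μF (le_of_eq (by rw [← hV x, hx]))).symm
    · intro h
      rw [hVF']
      refine integral_congr_ae ?_
      filter_upwards [h] with x hx
      rw [hV, hx]
  have hs : MeasurableSet {x : 𝓧 | μFx x = μF} := hμFx_meas (measurableSet_singleton μF)
  have hae_iff : (∀ᵐ x ∂νX, μFx x = μF) ↔ ∀ᵐ ω ∂μ, μFx (X ω) = μF :=
    ae_map_iff hX.aemeasurable hs
  refine ⟨hmain.trans hae_iff, fun hindep => ?_⟩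
  -- independence case
  set ρm := Measure.map (fun ω => (X ω, Y ω)) μ with hρmdef
  haveI : IsProbabilityMeasure ρm := Measure.isProbabilityMeasure_map (hX.prodMk hY).aemeasurable
  haveI : IsProbabilityMeasure (Measure.map Y μ) := Measure.isProbabilityMeasure_map hY.aemeasurable
  have hfst : ρm.fst = νX := Measure.fst_map_prodMk hY
  have h1 : ρm = ρm.fst.compProd κ := by rw [hfst]; exact hκ
  have h2 : ρm = ρm.fst.compProd (Kernel.const 𝓧 (Measure.map Y μ)) := by
    rw [hfst, Measure.compProd_const]
    exact (indepFun_iff_map_prod_eq_prod_map_map hX.aemeasurable hY.aemeasurable).mp hindep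
  have e1 := eq_condKernel_of_measure_eq_compProd κ h1
  have e2 := eq_condKernel_of_measure_eq_compProd _ h2
  rw [hfst] at e1 e2
  have hκY : ∀ᵐ x ∂νX, κ x = Measure.map Y μ := by
    filter_upwards [e1, e2] with x hx1 hx2
    rw [hx1, ← hx2, Kernel.const_apply]
  have hint : ∀ z : 𝓨, ∫ y, dist y z ^ 2 ∂(Measure.map Y μ) = ∫ ω, dist (Y ω) z ^ 2 ∂μ := by
    intro z
    have hm : Measurable fun y : 𝓨 => dist y z ^ 2 := by fun_prop
    rw [integral_map hY.aemeasurable hm.aestronglyMeasurable]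
  rw [hmain]
  filter_upwards [hκY, hμFx_min] with x hκx hmin
  have := hmin μF
  rw [hκx, hint, hint] at this
  exact hμF_uniq (μFx x) this
end

section
/- For every measurable map g : 𝓧 → 𝓨, E[d_Y²(Y, μ_{F,X})] = E[V(X)] ≤ E[d_Y²(Y, g(X))]. Consequently, 1 − E[d_Y²(Y, g(X))]/V_F ≤ ρ for every measurable g, i.e. the explained-variation coefficient of any regression function g (in particular the Fréchet coefficient of determination R⊕² of a global Fréchet regression model) is at most ρ, with equality when g(X) = μ_{F,X} almost surely. -/
open MeasureTheory ProbabilityTheory Bornology Filter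

/-- For every measurable map `g : 𝓧 → 𝓨`,
`E[d_Y²(Y, μ_{F,X})] = E[V(X)] ≤ E[d_Y²(Y, g(X))]`.  Consequently
`1 - E[d_Y²(Y, g(X))]/V_F ≤ ρ` for every measurable `g`, i.e. the explained-variation
coefficient of any regression function `g` is at most `ρ`, with equality when
`g(X) = μ_{F,X}` almost surely. -/
theorem frechet_correlation_coefficient_ge_regression_explained_variation
    {Ω 𝓧 𝓨 : Type*} [MeasurableSpace Ω]
    [MetricSpace 𝓧] [CompleteSpace 𝓧] [TopologicalSpace.SeparableSpace 𝓧]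
    [MeasurableSpace 𝓧] [BorelSpace 𝓧]
    [MetricSpace 𝓨] [CompleteSpace 𝓨] [TopologicalSpace.SeparableSpace 𝓨]
    [MeasurableSpace 𝓨] [BorelSpace 𝓨]
    (hbX : IsBounded (Set.univ : Set 𝓧)) (hbY : IsBounded (Set.univ : Set 𝓨))
    (μ : Measure Ω) [IsProbabilityMeasure μ]
    (X : Ω → 𝓧) (Y : Ω → 𝓨) (hX : Measurable X) (hY : Measurable Y)
    -- `κ` is a regular conditional distribution of `Y` given `X`:
    (κ : Kernel 𝓧 𝓨) [IsMarkovKernel κ]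
    (hκ : Measure.map (fun ω => (X ω, Y ω)) μ = (Measure.map X μ).compProd κ)
    -- the global Fréchet mean exists and is unique:
    (μF : 𝓨)
    (hμF_min : ∀ z : 𝓨, (∫ ω, dist (Y ω) μF ^ 2 ∂μ) ≤ ∫ ω, dist (Y ω) z ^ 2 ∂μ)
    (hμF_uniq : ∀ z : 𝓨, ((∫ ω, dist (Y ω) z ^ 2 ∂μ) ≤ ∫ ω, dist (Y ω) μF ^ 2 ∂μ) → z = μF)
    -- the conditional Fréchet mean exists, is unique `P_X`-a.e., and is measurable in `x`:
    (μFx : 𝓧 → 𝓨) (hμFx_meas : Measurable μFx)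
    (hμFx_min : ∀ᵐ x ∂(Measure.map X μ), ∀ z : 𝓨,
      (∫ y, dist y (μFx x) ^ 2 ∂(κ x)) ≤ ∫ y, dist y z ^ 2 ∂(κ x))
    (hμFx_uniq : ∀ᵐ x ∂(Measure.map X μ), ∀ z : 𝓨,
      ((∫ y, dist y z ^ 2 ∂(κ x)) ≤ ∫ y, dist y (μFx x) ^ 2 ∂(κ x)) → z = μFx x)
    -- the Fréchet variance, assumed strictly positive:
    (VF : ℝ) (hVF : VF = ∫ ω, dist (Y ω) μF ^ 2 ∂μ) (hVF_pos : 0 < VF)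
    -- the conditional Fréchet variance:
    (V : 𝓧 → ℝ) (hV : ∀ x, V x = ∫ y, dist y (μFx x) ^ 2 ∂(κ x))
    -- the Fréchet correlation coefficient:
    (ρ : ℝ) (hρ : ρ = 1 - (∫ x, V x ∂(Measure.map X μ)) / VF) :
    ∀ g : 𝓧 → 𝓨, Measurable g →
      ((∫ ω, dist (Y ω) (μFx (X ω)) ^ 2 ∂μ) = ∫ x, V x ∂(Measure.map X μ)) ∧
      ((∫ x, V x ∂(Measure.map X μ)) ≤ ∫ ω, dist (Y ω) (g (X ω)) ^ 2 ∂μ) ∧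
      (1 - (∫ ω, dist (Y ω) (g (X ω)) ^ 2 ∂μ) / VF ≤ ρ) ∧
      ((∀ᵐ ω ∂μ, g (X ω) = μFx (X ω)) →
        1 - (∫ ω, dist (Y ω) (g (X ω)) ^ 2 ∂μ) / VF = ρ) := by
  -- a uniform bound on distances in 𝓨
  obtain ⟨C₀, hC₀⟩ := Metric.isBounded_iff.mp hbY
  set C : ℝ := max C₀ 0 with hC
  have hCd : ∀ y z : 𝓨, dist y z ≤ C := fun y z =>
    le_max_of_le_left (hC₀ (Set.mem_univ y) (Set.mem_univ z))
  have hC0 : 0 ≤ C := le_max_right _ _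
  have hnorm : ∀ y z : 𝓨, ‖dist y z ^ 2‖ ≤ C ^ 2 := by
    intro y z
    rw [Real.norm_eq_abs, abs_of_nonneg (by positivity)]
    exact pow_le_pow_left₀ dist_nonneg (hCd y z) 2
  haveI : IsProbabilityMeasure (Measure.map X μ) := Measure.isProbabilityMeasure_map hX.aemeasurable
  -- per-x integrability of the squared distance
  have hIntY : ∀ (x : 𝓧) (z : 𝓨), Integrable (fun y => dist y z ^ 2) (κ x) := by
    intro x z
    exact ⟨((measurable_dist.comp (measurable_id.prodMk measurable_const)).pow_const
      2).aestronglyMeasurable,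
      HasFiniteIntegral.of_bounded (C := C ^ 2) (ae_of_all _ fun y => hnorm y z)⟩
  -- bounds on the inner integral
  have hInner_nonneg : ∀ (x : 𝓧) (z : 𝓨), 0 ≤ ∫ y, dist y z ^ 2 ∂(κ x) := fun x z =>
    integral_nonneg fun y => by positivity
  have hInner_bdd : ∀ (x : 𝓧) (z : 𝓨), ∫ y, dist y z ^ 2 ∂(κ x) ≤ C ^ 2 := by
    intro x z
    calc ∫ y, dist y z ^ 2 ∂(κ x) ≤ ∫ _, C ^ 2 ∂(κ x) :=
          integral_mono (hIntY x z) (integrable_const _) fun y => by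
            have := hnorm y z; rwa [Real.norm_eq_abs, abs_of_nonneg (by positivity)] at this
      _ = C ^ 2 := by simp
  -- key disintegration identity
  have key : ∀ h : 𝓧 → 𝓨, Measurable h →
      (∫ ω, dist (Y ω) (h (X ω)) ^ 2 ∂μ)
        = ∫ x, ∫ y, dist y (h x) ^ 2 ∂(κ x) ∂(Measure.map X μ) := by
    intro h hh
    have hf : Measurable (fun p : 𝓧 × 𝓨 => dist p.2 (h p.1) ^ 2) :=
      (measurable_snd.dist (hh.comp measurable_fst)).pow_const 2
    have hint : Integrable (fun p : 𝓧 × 𝓨 => dist p.2 (h p.1) ^ 2)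
        ((Measure.map X μ).compProd κ) :=
      ⟨hf.aestronglyMeasurable,
        HasFiniteIntegral.of_bounded (C := C ^ 2) (ae_of_all _ fun p => hnorm p.2 (h p.1))⟩
    calc (∫ ω, dist (Y ω) (h (X ω)) ^ 2 ∂μ)
        = ∫ p, dist p.2 (h p.1) ^ 2 ∂(Measure.map (fun ω => (X ω, Y ω)) μ) :=
          (integral_map (hX.prodMk hY).aemeasurable hf.aestronglyMeasurable).symm
      _ = ∫ p, dist p.2 (h p.1) ^ 2 ∂((Measure.map X μ).compProd κ) := by rw [hκ]
      _ = ∫ x, ∫ y, dist y (h x) ^ 2 ∂(κ x) ∂(Measure.map X μ) := integral_compProd hint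
  intro g hg
  -- part 1
  have eq1 : (∫ ω, dist (Y ω) (μFx (X ω)) ^ 2 ∂μ) = ∫ x, V x ∂(Measure.map X μ) := by
    rw [key μFx hμFx_meas]
    exact integral_congr_ae (ae_of_all _ fun x => (hV x).symm)
  -- integrability over x of the two inner-integral functions
  have hintV : Integrable V (Measure.map X μ) := by
    refine ⟨?_, HasFiniteIntegral.of_bounded (C := C ^ 2) (ae_of_all _ fun x => ?_)⟩
    · have : StronglyMeasurable (fun p : 𝓧 × 𝓨 => dist p.2 (μFx p.1) ^ 2) :=
        ((measurable_snd.dist (hμFx_meas.comp measurable_fst)).pow_const 2).stronglyMeasurable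
      have hsm := this.integral_kernel_prod_right' (κ := κ)
      have hVeq : V = fun x => ∫ y, dist y (μFx x) ^ 2 ∂(κ x) := funext hV
      rw [hVeq]
      exact hsm.aestronglyMeasurable
    · rw [hV, Real.norm_eq_abs, abs_of_nonneg (hInner_nonneg _ _)]
      exact hInner_bdd _ _
  have hintG : Integrable (fun x => ∫ y, dist y (g x) ^ 2 ∂(κ x)) (Measure.map X μ) := by
    refine ⟨?_, HasFiniteIntegral.of_bounded (C := C ^ 2) (ae_of_all _ fun x => ?_)⟩
    · have : StronglyMeasurable (fun p : 𝓧 × 𝓨 => dist p.2 (g p.1) ^ 2) :=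
        ((measurable_snd.dist (hg.comp measurable_fst)).pow_const 2).stronglyMeasurable
      exact (this.integral_kernel_prod_right' (κ := κ)).aestronglyMeasurable
    · rw [Real.norm_eq_abs, abs_of_nonneg (hInner_nonneg _ _)]
      exact hInner_bdd _ _
  -- part 2
  have le2 : (∫ x, V x ∂(Measure.map X μ)) ≤ ∫ ω, dist (Y ω) (g (X ω)) ^ 2 ∂μ := by
    rw [key g hg]
    refine integral_mono_ae hintV hintG ?_
    filter_upwards [hμFx_min] with x hx
    rw [hV x]; exact hx (g x)
  -- part 3
  have le3 : 1 - (∫ ω, dist (Y ω) (g (X ω)) ^ 2 ∂μ) / VF ≤ ρ := by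
    rw [hρ]
    have hdiv : (∫ x, V x ∂(Measure.map X μ)) / VF
        ≤ (∫ ω, dist (Y ω) (g (X ω)) ^ 2 ∂μ) / VF := by gcongr
    linarith
  refine ⟨eq1, le2, le3, ?_⟩
  intro hae
  have : (∫ ω, dist (Y ω) (g (X ω)) ^ 2 ∂μ) = ∫ ω, dist (Y ω) (μFx (X ω)) ^ 2 ∂μ := by
    refine integral_congr_ae ?_
    filter_upwards [hae] with ω hω
    rw [hω]
  rw [this, eq1, hρ]
end

section
/- For every δ ∈ (0, 1), ℙ( max_{1 ≤ m ≤ M_n} | n_m/(n p_{n,m}) − 1 | > δ ) → 0 as n → ∞. In particular, min_{1 ≤ m ≤ M_n} n_m and max_{1 ≤ m ≤ M_n} n_m are both of exact order n/M_n ≍ n^{1−a} in probability. -/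
open MeasureTheory ProbabilityTheory Filter
open scoped Classical ENNReal

lemma aux_cheb {Ω 𝓧 : Type*} [MeasurableSpace Ω] [MeasurableSpace 𝓧]
    (μ : Measure Ω) [IsProbabilityMeasure μ]
    (X : ℕ → Ω → 𝓧) (hXmeas : ∀ i, Measurable (X i))
    (PX : Measure 𝓧) [IsProbabilityMeasure PX]
    (hiid : iIndepFun X μ)
    (hlaw : ∀ i, Measure.map (X i) μ = PX)
    (S : Set 𝓧) (hS : MeasurableSet S)
    (n : ℕ) (c : ℝ) (hc : 0 < c) :
    μ {ω | c ≤ |(((Finset.range n).filter fun i => X i ω ∈ S).card : ℝ)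
        - (n : ℝ) * (PX S).toReal|}
      ≤ ENNReal.ofReal ((n : ℝ) * (PX S).toReal / c ^ 2) := by
  set p : ℝ := (PX S).toReal with hp
  set g : 𝓧 → ℝ := S.indicator (fun _ => (1:ℝ)) with hg
  have hgmeas : Measurable g := measurable_const.indicator hS
  set Y : ℕ → Ω → ℝ := fun i ω => g (X i ω) with hYdef
  have hYmeas : ∀ i, Measurable (Y i) := fun i => hgmeas.comp (hXmeas i)
  have hYval : ∀ i ω, Y i ω = if X i ω ∈ S then 1 else 0 := by
    intro i ω; simp [hYdef, hg, Set.indicator_apply]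
  have hYmem : ∀ i, MemLp (Y i) 2 μ := by
    intro i
    refine MemLp.of_bound (hYmeas i).aestronglyMeasurable 1 ?_
    filter_upwards with ω
    rw [hYval]; split <;> simp
  have hYint : ∀ i, ∫ ω, Y i ω ∂μ = p := by
    intro i
    have h1 : ∫ ω, Y i ω ∂μ = ∫ x, g x ∂(Measure.map (X i) μ) := by
      rw [integral_map (hXmeas i).aemeasurable
        (by rw [hlaw i]; exact hgmeas.aestronglyMeasurable)]
    rw [h1, hlaw i, hg, integral_indicator_const (1:ℝ) hS, smul_eq_mul, mul_one]
    rfl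
  have hmean : ∫ ω, (∑ i ∈ Finset.range n, Y i) ω ∂μ = n * p := by
    simp only [Finset.sum_apply]
    rw [integral_finset_sum _ (fun i _ => ((hYmem i).integrable one_le_two))]
    simp [hYint, Finset.sum_const]
  have hsum_mem : MemLp (∑ i ∈ Finset.range n, Y i) 2 μ :=
    memLp_finset_sum' _ (fun i _ => hYmem i)
  have hsq : ∀ i, (Y i) ^ 2 = Y i := by
    intro i; funext ω
    simp only [Pi.pow_apply, hYval]
    split <;> norm_num
  have hvar_each : ∀ i, variance (Y i) μ ≤ p := by
    intro i
    rw [variance_eq_sub (hYmem i), hsq i]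
    have h2 : ∫ ω, Y i ω ∂μ = p := hYint i
    have : μ[Y i] = p := h2
    rw [this]
    nlinarith [sq_nonneg p]
  have hvar : variance (∑ i ∈ Finset.range n, Y i) μ ≤ n * p := by
    rw [IndepFun.variance_sum (fun i _ => hYmem i)
      (fun i _ j _ hij => (hiid.indepFun hij).comp hgmeas hgmeas)]
    calc (∑ i ∈ Finset.range n, variance (Y i) μ) ≤ ∑ _i ∈ Finset.range n, p :=
          Finset.sum_le_sum (fun i _ => hvar_each i)
      _ = n * p := by simp [Finset.sum_const, nsmul_eq_mul]
  have hcard : ∀ ω, (((Finset.range n).filter fun i => X i ω ∈ S).card : ℝ)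
      = (∑ i ∈ Finset.range n, Y i) ω := by
    intro ω
    rw [Finset.card_filter]
    push_cast
    rw [Finset.sum_apply]
    exact Finset.sum_congr rfl fun i _ => by rw [hYval]
  have hcheb := meas_ge_le_variance_div_sq (μ := μ) hsum_mem hc
  have hsetseq : {ω | c ≤ |(((Finset.range n).filter fun i => X i ω ∈ S).card : ℝ)
        - (n : ℝ) * p|}
      = {ω | c ≤ |(∑ i ∈ Finset.range n, Y i) ω - μ[∑ i ∈ Finset.range n, Y i]|} := by
    ext ω
    rw [Set.mem_setOf_eq, Set.mem_setOf_eq, hcard ω, hmean]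
  rw [hsetseq]
  refine hcheb.trans (ENNReal.ofReal_le_ofReal ?_)
  exact div_le_div_of_nonneg_right hvar (by positivity)

set_option maxHeartbeats 2000000 in
/-- Lemma 1 of the paper, first part.
Let `X 0, X 1, …` be i.i.d. random elements of a metric space `𝓧` with common law `PX`.
For each `n`, let `{Ωp n m}_{m < M n}` be a measurable partition of `𝓧` that is balanced
(`c₁/M n ≤ PX (Ωp n m) ≤ c₂/M n`) and whose size satisfies `M n ≍ n^a` with `a ∈ [0, 1/3)`.
Let `count n m` be the cell counts `n_m = #{i < n : X i ∈ Ωp n m}`.  Then, for every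
`δ ∈ (0,1)`, `ℙ(max_{m < M n} |n_m/(n p_{n,m}) - 1| > δ) → 0`; in particular, the minimum
and maximum cell counts are both of exact order `n / M n ≍ n^{1-a}` in probability. -/
theorem cell_counts_uniformly_concentrate
    {Ω 𝓧 : Type*} [MeasurableSpace Ω]
    [MetricSpace 𝓧] [MeasurableSpace 𝓧] [BorelSpace 𝓧]
    (μ : Measure Ω) [IsProbabilityMeasure μ]
    (X : ℕ → Ω → 𝓧) (hXmeas : ∀ i, Measurable (X i))
    (PX : Measure 𝓧) [IsProbabilityMeasure PX]
    (hiid : iIndepFun X μ)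
    (hlaw : ∀ i, Measure.map (X i) μ = PX)
    (M : ℕ → ℕ) (Ωp : ℕ → ℕ → Set 𝓧)
    (hmeas : ∀ n m, MeasurableSet (Ωp n m))
    (hdisj : ∀ n, ∀ m₁ < M n, ∀ m₂ < M n, m₁ ≠ m₂ → Disjoint (Ωp n m₁) (Ωp n m₂))
    (hcover : ∀ n, (⋃ m ∈ Finset.range (M n), Ωp n m) = Set.univ)
    (c₁ c₂ : ℝ) (hc₁ : 0 < c₁) (hc₁₂ : c₁ ≤ c₂)
    (hbalanced : ∀ n, ∀ m < M n,
      c₁ / (M n : ℝ) ≤ (PX (Ωp n m)).toReal ∧ (PX (Ωp n m)).toReal ≤ c₂ / (M n : ℝ))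
    (a : ℝ) (ha₀ : 0 ≤ a) (ha : a < 1 / 3)
    (c₃ c₄ : ℝ) (hc₃ : 0 < c₃) (hc₃₄ : c₃ ≤ c₄)
    (hM : ∀ n : ℕ, 1 ≤ n →
      c₃ * (n : ℝ) ^ a ≤ (M n : ℝ) ∧ (M n : ℝ) ≤ c₄ * (n : ℝ) ^ a)
    (count : ℕ → ℕ → Ω → ℕ)
    (hcount : ∀ n m ω,
      count n m ω = ((Finset.range n).filter fun i => X i ω ∈ Ωp n m).card) :
    (∀ δ : ℝ, 0 < δ → δ < 1 →
      Tendsto (fun n => (μ {ω | ∃ m < M n,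
          δ < |(count n m ω : ℝ) / ((n : ℝ) * (PX (Ωp n m)).toReal) - 1|}).toReal)
        atTop (nhds 0)) ∧
    ∃ k₁ k₂ : ℝ, 0 < k₁ ∧ k₁ ≤ k₂ ∧
      Tendsto (fun n => (μ {ω | ∀ m < M n,
          k₁ * (n : ℝ) ^ ((1 : ℝ) - a) ≤ (count n m ω : ℝ) ∧
          (count n m ω : ℝ) ≤ k₂ * (n : ℝ) ^ ((1 : ℝ) - a)}).toReal)
        atTop (nhds 1) := by
  have hc₄ : 0 < c₄ := lt_of_lt_of_le hc₃ hc₃₄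
  have hc₂ : 0 < c₂ := lt_of_lt_of_le hc₁ hc₁₂
  -- Key concentration estimate, for every δ > 0.
  have key : ∀ δ : ℝ, 0 < δ →
      Tendsto (fun n => (μ {ω | ∃ m < M n,
          δ < |(count n m ω : ℝ) / ((n : ℝ) * (PX (Ωp n m)).toReal) - 1|}).toReal)
        atTop (nhds 0) := by
    intro δ hδ
    set b : ℝ := c₄ ^ 2 / (δ ^ 2 * c₁) with hb
    have hbnn : 0 ≤ b := by positivity
    have hub : ∀ n : ℕ, 1 ≤ n →
        (μ {ω | ∃ m < M n,
          δ < |(count n m ω : ℝ) / ((n : ℝ) * (PX (Ωp n m)).toReal) - 1|}).toReal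
          ≤ b * (n : ℝ) ^ (2 * a - 1) := by
      intro n hn
      have hn0 : (0:ℝ) < n := by exact_mod_cast hn
      have hna : (0:ℝ) < (n:ℝ) ^ a := Real.rpow_pos_of_pos hn0 a
      obtain ⟨hM₁, hM₂⟩ := hM n hn
      have hMpos : (0:ℝ) < (M n : ℝ) := lt_of_lt_of_le (by positivity) hM₁
      have hpfacts : ∀ m < M n, 0 < (PX (Ωp n m)).toReal ∧
          c₁ ≤ c₄ * (n:ℝ)^a * (PX (Ωp n m)).toReal := by
        intro m hm
        obtain ⟨hl, hu⟩ := hbalanced n m hm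
        have hppos : 0 < (PX (Ωp n m)).toReal := lt_of_lt_of_le (by positivity) hl
        refine ⟨hppos, ?_⟩
        have hl' : c₁ ≤ (PX (Ωp n m)).toReal * (M n : ℝ) := (div_le_iff₀ hMpos).mp hl
        nlinarith [mul_le_mul_of_nonneg_left hM₂ hppos.le]
      have hsub : {ω | ∃ m < M n,
            δ < |(count n m ω : ℝ) / ((n : ℝ) * (PX (Ωp n m)).toReal) - 1|}
          ⊆ ⋃ m ∈ Finset.range (M n), {ω | δ * ((n:ℝ) * (PX (Ωp n m)).toReal) ≤
            |(((Finset.range n).filter fun i => X i ω ∈ Ωp n m).card : ℝ)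
              - (n:ℝ) * (PX (Ωp n m)).toReal|} := by
        intro ω hω
        obtain ⟨m, hm, hδω⟩ := hω
        have hp := (hpfacts m hm).1
        have hnp : (0:ℝ) < (n:ℝ) * (PX (Ωp n m)).toReal := by positivity
        simp only [Set.mem_iUnion, Finset.mem_range, Set.mem_setOf_eq]
        refine ⟨m, hm, ?_⟩
        rw [← hcount n m ω]
        have heq : (count n m ω : ℝ) / ((n:ℝ) * (PX (Ωp n m)).toReal) - 1
            = ((count n m ω : ℝ) - (n:ℝ) * (PX (Ωp n m)).toReal)
              / ((n:ℝ) * (PX (Ωp n m)).toReal) := by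
          field_simp
        rw [heq, abs_div, abs_of_pos hnp] at hδω
        have := (lt_div_iff₀ hnp).mp hδω
        linarith
      set r : ℝ := c₄ * (n:ℝ)^a / (δ^2 * c₁ * n) with hr
      have hrnn : 0 ≤ r := by positivity
      have hbound : μ {ω | ∃ m < M n,
            δ < |(count n m ω : ℝ) / ((n : ℝ) * (PX (Ωp n m)).toReal) - 1|}
          ≤ ENNReal.ofReal (b * (n:ℝ) ^ (2*a-1)) := by
        calc μ _ ≤ μ (⋃ m ∈ Finset.range (M n), {ω | δ * ((n:ℝ) * (PX (Ωp n m)).toReal) ≤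
              |(((Finset.range n).filter fun i => X i ω ∈ Ωp n m).card : ℝ)
                - (n:ℝ) * (PX (Ωp n m)).toReal|}) := measure_mono hsub
          _ ≤ ∑ m ∈ Finset.range (M n), μ {ω | δ * ((n:ℝ) * (PX (Ωp n m)).toReal) ≤
              |(((Finset.range n).filter fun i => X i ω ∈ Ωp n m).card : ℝ)
                - (n:ℝ) * (PX (Ωp n m)).toReal|} := measure_biUnion_finset_le _ _
          _ ≤ ∑ _m ∈ Finset.range (M n), ENNReal.ofReal r := ?_
          _ = (M n : ℝ≥0∞) * ENNReal.ofReal r := by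
              rw [Finset.sum_const, Finset.card_range, nsmul_eq_mul]
          _ = ENNReal.ofReal ((M n : ℝ) * r) := by
              rw [← ENNReal.ofReal_natCast (M n), ← ENNReal.ofReal_mul (Nat.cast_nonneg _)]
          _ ≤ ENNReal.ofReal (b * (n:ℝ) ^ (2*a-1)) := ?_
        · refine Finset.sum_le_sum fun m hm' => ?_
          have hm := Finset.mem_range.mp hm'
          obtain ⟨hppos, hkey⟩ := hpfacts m hm
          have hnp : (0:ℝ) < (n:ℝ) * (PX (Ωp n m)).toReal := by positivity
          have hch := aux_cheb μ X hXmeas PX hiid hlaw (Ωp n m) (hmeas n m) n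
            (δ * ((n:ℝ) * (PX (Ωp n m)).toReal)) (by positivity)
          refine hch.trans (ENNReal.ofReal_le_ofReal ?_)
          have heq : (n:ℝ) * (PX (Ωp n m)).toReal
              / (δ * ((n:ℝ) * (PX (Ωp n m)).toReal))^2
              = 1 / (δ^2 * ((n:ℝ) * (PX (Ωp n m)).toReal)) := by
            field_simp
          rw [heq, hr, div_le_div_iff₀ (by positivity) (by positivity)]
          have h3 := mul_le_mul_of_nonneg_left hkey
            (by positivity : (0:ℝ) ≤ δ^2 * (n:ℝ))
          nlinarith [h3]
        · refine ENNReal.ofReal_le_ofReal ?_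
          have h2a : b * (n:ℝ)^(2*a-1)
              = (c₄ * (n:ℝ)^a) * (c₄ * (n:ℝ)^a / (δ^2 * c₁ * n)) := by
            rw [show (2*a - 1) = a + a - 1 by ring, Real.rpow_sub hn0,
              Real.rpow_add hn0, Real.rpow_one, hb]
            field_simp
          rw [h2a, hr]
          exact mul_le_mul_of_nonneg_right hM₂ (by positivity)
      exact ENNReal.toReal_le_of_le_ofReal
        (mul_nonneg hbnn (Real.rpow_nonneg hn0.le _)) hbound
    have hgt : Tendsto (fun n : ℕ => b * (n:ℝ) ^ (2*a-1)) atTop (nhds 0) := by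
      have h1 : Tendsto (fun x : ℝ => x ^ (2*a-1)) atTop (nhds 0) := by
        have he : (2*a-1) = -(1-2*a) := by ring
        rw [he]
        exact tendsto_rpow_neg_atTop (by linarith)
      have h2 := (h1.comp tendsto_natCast_atTop_atTop).const_mul b
      simpa using h2
    refine squeeze_zero' (Eventually.of_forall fun n => ENNReal.toReal_nonneg) ?_ hgt
    filter_upwards [eventually_ge_atTop 1] with n hn using hub n hn
  constructor
  · intro δ hδ _; exact key δ hδ
  · refine ⟨c₁/(2*c₄), 3*c₂/(2*c₃), by positivity,
      div_le_div₀ (by positivity) (by linarith) (by positivity) (by linarith), ?_⟩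
    have hE := key (1/2) (by norm_num)
    have hlow : Tendsto (fun n => 1 - (μ {ω | ∃ m < M n,
        (1:ℝ)/2 < |(count n m ω : ℝ) / ((n : ℝ) * (PX (Ωp n m)).toReal) - 1|}).toReal)
        atTop (nhds 1) := by
      have := hE.const_sub 1
      simpa using this
    refine tendsto_of_tendsto_of_tendsto_of_le_of_le' hlow tendsto_const_nhds ?_
      (Eventually.of_forall fun n => ?_)
    · filter_upwards [eventually_ge_atTop 1] with n hn
      have hn0 : (0:ℝ) < n := by exact_mod_cast hn
      have hna : (0:ℝ) < (n:ℝ) ^ a := Real.rpow_pos_of_pos hn0 a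
      obtain ⟨hM₁, hM₂⟩ := hM n hn
      have hMpos : (0:ℝ) < (M n : ℝ) := lt_of_lt_of_le (by positivity) hM₁
      have hpow : (n:ℝ)^((1:ℝ)-a) = (n:ℝ) / (n:ℝ)^a := by
        rw [Real.rpow_sub hn0, Real.rpow_one]
      have hsub : {ω | ∃ m < M n,
            (1:ℝ)/2 < |(count n m ω : ℝ) / ((n : ℝ) * (PX (Ωp n m)).toReal) - 1|}ᶜ
          ⊆ {ω | ∀ m < M n,
            c₁/(2*c₄) * (n : ℝ) ^ ((1 : ℝ) - a) ≤ (count n m ω : ℝ) ∧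
            (count n m ω : ℝ) ≤ 3*c₂/(2*c₃) * (n : ℝ) ^ ((1 : ℝ) - a)} := by
        intro ω hω
        simp only [Set.mem_compl_iff, Set.mem_setOf_eq] at hω
        push_neg at hω
        intro m hm
        have habs := hω m hm
        obtain ⟨hl, hu⟩ := hbalanced n m hm
        have hppos : 0 < (PX (Ωp n m)).toReal := lt_of_lt_of_le (by positivity) hl
        have hnp : (0:ℝ) < (n:ℝ) * (PX (Ωp n m)).toReal := by positivity
        obtain ⟨ha1, ha2⟩ := abs_le.mp habs
        have h1 : (n:ℝ) * (PX (Ωp n m)).toReal / 2 ≤ (count n m ω : ℝ) := by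
          have := (le_div_iff₀ hnp).mp
            (by linarith : (1:ℝ)/2 ≤ (count n m ω : ℝ) / ((n:ℝ) * (PX (Ωp n m)).toReal))
          linarith
        have h2 : (count n m ω : ℝ) ≤ 3/2 * ((n:ℝ) * (PX (Ωp n m)).toReal) := by
          have := (div_le_iff₀ hnp).mp
            (by linarith : (count n m ω : ℝ) / ((n:ℝ) * (PX (Ωp n m)).toReal) ≤ 3/2)
          linarith
        have step1 : c₁ / (c₄ * (n:ℝ)^a) ≤ (PX (Ωp n m)).toReal :=
          le_trans (by gcongr) hl
        have step2 : (PX (Ωp n m)).toReal ≤ c₂ / (c₃ * (n:ℝ)^a) :=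
          le_trans hu (by gcongr)
        constructor
        · calc c₁/(2*c₄) * (n:ℝ)^((1:ℝ)-a)
              = (n:ℝ) * (c₁/(c₄*(n:ℝ)^a)) / 2 := by rw [hpow]; field_simp
            _ ≤ (n:ℝ) * (PX (Ωp n m)).toReal / 2 := by gcongr
            _ ≤ (count n m ω : ℝ) := h1
        · calc (count n m ω : ℝ) ≤ 3/2 * ((n:ℝ) * (PX (Ωp n m)).toReal) := h2
            _ ≤ 3/2 * ((n:ℝ) * (c₂/(c₃*(n:ℝ)^a))) := by gcongr
            _ = 3*c₂/(2*c₃) * (n:ℝ)^((1:ℝ)-a) := by rw [hpow]; field_simp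
      have hA : (1:ℝ) ≤ (μ {ω | ∃ m < M n,
          (1:ℝ)/2 < |(count n m ω : ℝ) / ((n : ℝ) * (PX (Ωp n m)).toReal) - 1|}).toReal
          + (μ ({ω | ∃ m < M n,
          (1:ℝ)/2 < |(count n m ω : ℝ) / ((n : ℝ) * (PX (Ωp n m)).toReal) - 1|}ᶜ)).toReal := by
        have h := measure_union_le (μ := μ)
          {ω | ∃ m < M n,
            (1:ℝ)/2 < |(count n m ω : ℝ) / ((n : ℝ) * (PX (Ωp n m)).toReal) - 1|}
          ({ω | ∃ m < M n,
            (1:ℝ)/2 < |(count n m ω : ℝ) / ((n : ℝ) * (PX (Ωp n m)).toReal) - 1|}ᶜ)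
        rw [Set.union_compl_self, measure_univ] at h
        calc (1:ℝ) = (1:ℝ≥0∞).toReal := by simp
          _ ≤ _ := ENNReal.toReal_mono
            (ENNReal.add_ne_top.mpr ⟨measure_ne_top _ _, measure_ne_top _ _⟩) h
          _ = _ := ENNReal.toReal_add (measure_ne_top _ _) (measure_ne_top _ _)
      have hB := ENNReal.toReal_mono (measure_ne_top μ _) (measure_mono hsub)
      linarith
    · calc (μ _).toReal ≤ (1:ℝ≥0∞).toReal :=
          ENNReal.toReal_mono ENNReal.one_ne_top prob_le_one
        _ = 1 := by simp
end

section
/- The minimum cell count diverges almost surely: min_{1 ≤ m ≤ M_n} n_m → ∞ almost surely as n → ∞. -/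
set_option maxHeartbeats 1000000

open MeasureTheory ProbabilityTheory Filter
open scoped Classical ENNReal Topology

/-- Lemma 1 of the paper, second part.
In the balanced-partition setting with `M n ≍ n^a`, `a ∈ [0, 1/3)`, the minimum cell count
diverges almost surely: `min_{1 ≤ m ≤ M n} n_m → ∞` almost surely as `n → ∞`. -/
theorem min_cell_count_tendsto_atTop_ae
    {Ω 𝓧 : Type*} [MeasurableSpace Ω]
    [MetricSpace 𝓧] [MeasurableSpace 𝓧] [BorelSpace 𝓧]
    (μ : Measure Ω) [IsProbabilityMeasure μ]
    (X : ℕ → Ω → 𝓧) (hXmeas : ∀ i, Measurable (X i))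
    (PX : Measure 𝓧) [IsProbabilityMeasure PX]
    (hiid : iIndepFun X μ)
    (hlaw : ∀ i, Measure.map (X i) μ = PX)
    (M : ℕ → ℕ) (Ωp : ℕ → ℕ → Set 𝓧)
    (hmeas : ∀ n m, MeasurableSet (Ωp n m))
    (hdisj : ∀ n, ∀ m₁ < M n, ∀ m₂ < M n, m₁ ≠ m₂ → Disjoint (Ωp n m₁) (Ωp n m₂))
    (hcover : ∀ n, (⋃ m ∈ Finset.range (M n), Ωp n m) = Set.univ)
    (c₁ c₂ : ℝ) (hc₁ : 0 < c₁) (hc₁₂ : c₁ ≤ c₂)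
    (hbalanced : ∀ n, ∀ m < M n,
      c₁ / (M n : ℝ) ≤ (PX (Ωp n m)).toReal ∧ (PX (Ωp n m)).toReal ≤ c₂ / (M n : ℝ))
    (a : ℝ) (ha₀ : 0 ≤ a) (ha : a < 1 / 3)
    (c₃ c₄ : ℝ) (hc₃ : 0 < c₃) (hc₃₄ : c₃ ≤ c₄)
    (hM : ∀ n : ℕ, 1 ≤ n →
      c₃ * (n : ℝ) ^ a ≤ (M n : ℝ) ∧ (M n : ℝ) ≤ c₄ * (n : ℝ) ^ a)
    (count : ℕ → ℕ → Ω → ℕ)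
    (hcount : ∀ n m ω,
      count n m ω = ((Finset.range n).filter fun i => X i ω ∈ Ωp n m).card) :
    ∀ᵐ ω ∂μ, ∀ K : ℕ, ∀ᶠ n in Filter.atTop, ∀ m < M n, K ≤ count n m ω := by
  rw [ae_all_iff]
  intro K
  have hpre : ∀ (i : ℕ) (A : Set 𝓧), MeasurableSet A → μ (X i ⁻¹' A) = PX A := by
    intro i A hA
    rw [← hlaw i, Measure.map_apply (hXmeas i) hA]
  set s : ℕ → Set Ω := fun n => ⋃ m ∈ Finset.range (M n), {ω | count n m ω < K} with hs
  -- per-cell bound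
  have cell : ∀ n m, m < M n → K ≤ n →
      μ {ω | count n m ω < K} ≤
        ((n : ℝ≥0∞) ^ K) *
          ENNReal.ofReal (Real.exp (-(c₁ / (M n : ℝ)) * ((n - K + 1 : ℕ) : ℝ))) := by
    intro n m hm hKn
    set A := Ωp n m with hA
    set j := n - K + 1 with hj
    -- inclusion into union over subsets
    have hsub : {ω | count n m ω < K} ⊆
        ⋃ S ∈ (Finset.range n).powersetCard j, ⋂ i ∈ S, X i ⁻¹' Aᶜ := by
      intro ω hω
      simp only [Set.mem_setOf_eq, hcount] at hω
      rw [← hA] at hω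
      set T := (Finset.range n).filter (fun i => X i ω ∉ A) with hT
      have hcard : ((Finset.range n).filter (fun i => X i ω ∈ A)).card + T.card = n := by
        simpa using Finset.card_filter_add_card_filter_not
          (s := Finset.range n) (p := fun i => X i ω ∈ A)
      have hjT : j ≤ T.card := by omega
      obtain ⟨S, hST, hScard⟩ := Finset.exists_subset_card_eq hjT
      refine Set.mem_iUnion₂.mpr ⟨S, ?_, ?_⟩
      · exact Finset.mem_powersetCard.mpr ⟨hST.trans (Finset.filter_subset _ _), hScard⟩
      · refine Set.mem_iInter₂.mpr fun i hi => ?_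
        have := hST hi
        rw [hT, Finset.mem_filter] at this
        exact this.2
    have hq : PX Aᶜ ≤ ENNReal.ofReal (Real.exp (-(c₁ / (M n : ℝ)))) := by
      have h1 : (PX Aᶜ).toReal = 1 - (PX A).toReal := by
        rw [prob_compl_eq_one_sub (hmeas n m),
          ENNReal.toReal_sub_of_le prob_le_one ENNReal.one_ne_top, ENNReal.toReal_one]
      have h2 : c₁ / (M n : ℝ) ≤ (PX A).toReal := (hbalanced n m hm).1
      have h3 : (PX Aᶜ).toReal ≤ Real.exp (-(c₁ / (M n : ℝ))) := by
        have := Real.add_one_le_exp (-(c₁ / (M n : ℝ)))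
        linarith
      calc PX Aᶜ = ENNReal.ofReal ((PX Aᶜ).toReal) :=
            (ENNReal.ofReal_toReal (measure_ne_top _ _)).symm
        _ ≤ _ := ENNReal.ofReal_le_ofReal h3
    -- measure of each intersection
    have hinter : ∀ S ∈ (Finset.range n).powersetCard j,
        μ (⋂ i ∈ S, X i ⁻¹' Aᶜ) = (PX Aᶜ) ^ j := by
      intro S hS
      have hprod := hiid.meas_biInter (S := S) (s := fun i => X i ⁻¹' Aᶜ)
        (fun i _ => ⟨Aᶜ, (hmeas n m).compl, rfl⟩)
      rw [hprod]
      have hScard := (Finset.mem_powersetCard.mp hS).2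
      calc ∏ i ∈ S, μ (X i ⁻¹' Aᶜ) = ∏ _i ∈ S, PX Aᶜ := by
            refine Finset.prod_congr rfl fun i _ => hpre i Aᶜ (hmeas n m).compl
        _ = (PX Aᶜ) ^ j := by rw [Finset.prod_const, hScard]
    calc μ {ω | count n m ω < K}
        ≤ μ (⋃ S ∈ (Finset.range n).powersetCard j, ⋂ i ∈ S, X i ⁻¹' Aᶜ) :=
          measure_mono hsub
      _ ≤ ∑ S ∈ (Finset.range n).powersetCard j, μ (⋂ i ∈ S, X i ⁻¹' Aᶜ) :=
          measure_biUnion_finset_le _ _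
      _ = ∑ S ∈ (Finset.range n).powersetCard j, (PX Aᶜ) ^ j :=
          Finset.sum_congr rfl hinter
      _ = (n.choose j : ℝ≥0∞) * (PX Aᶜ) ^ j := by
          rw [Finset.sum_const, Finset.card_powersetCard, Finset.card_range, nsmul_eq_mul]
      _ ≤ ((n : ℝ≥0∞) ^ K) * ENNReal.ofReal (Real.exp (-(c₁ / (M n : ℝ)) * (j : ℝ))) := by
          gcongr
          · have hchoose : n.choose j ≤ n ^ K := by
              rcases Nat.eq_zero_or_pos K with hK0 | hK0
              · have hlt : n < j := by omega
                simp [Nat.choose_eq_zero_of_lt hlt]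
              · have hjn : j ≤ n := by omega
                have h1 : n.choose j = n.choose (K - 1) := by
                  rw [← Nat.choose_symm hjn]
                  congr 1
                  omega
                calc n.choose j = n.choose (K - 1) := h1
                  _ ≤ n ^ (K - 1) := Nat.choose_le_pow _ _
                  _ ≤ n ^ K := Nat.pow_le_pow_right (by omega) (by omega)
            exact_mod_cast hchoose
          · calc (PX Aᶜ) ^ j ≤ (ENNReal.ofReal (Real.exp (-(c₁ / (M n : ℝ))))) ^ j :=
                pow_le_pow_left' hq j
              _ = ENNReal.ofReal (Real.exp (-(c₁ / (M n : ℝ)) * (j : ℝ))) := by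
                rw [← ENNReal.ofReal_pow (Real.exp_nonneg _), ← Real.exp_nat_mul, mul_comm (j:ℝ)]
  -- per-n bound
  have hsn : ∀ n, K ≤ n → μ (s n) ≤ ENNReal.ofReal
      ((M n : ℝ) * (n : ℝ) ^ K *
        Real.exp (-(c₁ / (M n : ℝ)) * ((n - K + 1 : ℕ) : ℝ))) := by
    intro n hKn
    calc μ (s n) ≤ ∑ m ∈ Finset.range (M n), μ {ω | count n m ω < K} :=
          measure_biUnion_finset_le _ _
      _ ≤ ∑ m ∈ Finset.range (M n), ((n : ℝ≥0∞) ^ K) *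
            ENNReal.ofReal (Real.exp (-(c₁ / (M n : ℝ)) * ((n - K + 1 : ℕ) : ℝ))) :=
          Finset.sum_le_sum fun m hm => cell n m (Finset.mem_range.mp hm) hKn
      _ = (M n : ℝ≥0∞) * (((n : ℝ≥0∞) ^ K) *
            ENNReal.ofReal (Real.exp (-(c₁ / (M n : ℝ)) * ((n - K + 1 : ℕ) : ℝ)))) := by
          rw [Finset.sum_const, Finset.card_range, nsmul_eq_mul]
      _ = _ := by
          rw [show ((M n : ℝ) * (n : ℝ) ^ K *
              Real.exp (-(c₁ / (M n : ℝ)) * ((n - K + 1 : ℕ) : ℝ))) = (M n : ℝ) *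
              ((n:ℝ)^K * Real.exp (-(c₁ / (M n : ℝ)) * ((n - K + 1 : ℕ) : ℝ))) from by ring,
            ENNReal.ofReal_mul (Nat.cast_nonneg _),
            ENNReal.ofReal_mul (pow_nonneg (Nat.cast_nonneg _) _),
            ENNReal.ofReal_natCast, ENNReal.ofReal_pow (Nat.cast_nonneg _),
            ENNReal.ofReal_natCast]
  -- asymptotic bound
  have hc₄ : (0 : ℝ) < c₄ := lt_of_lt_of_le hc₃ hc₃₄
  have hb : (0 : ℝ) < c₁ / (2 * c₄) := div_pos hc₁ (by linarith)
  set t : ℝ := 1 / 3 + K + 2 with ht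
  have hg : Tendsto (fun x : ℝ => c₄ * (x ^ t * Real.exp (-(c₁ / (2 * c₄)) * x ^ ((2:ℝ)/3))))
      atTop (𝓝 0) := by
    have base := tendsto_rpow_mul_exp_neg_mul_atTop_nhds_zero (t * (3/2)) _ hb
    have comp := base.comp (tendsto_rpow_atTop (by norm_num : (0:ℝ) < 2/3))
    have heq : (fun x : ℝ => (x ^ ((2:ℝ)/3)) ^ (t * (3/2)) *
        Real.exp (-(c₁ / (2 * c₄)) * x ^ ((2:ℝ)/3))) =ᶠ[atTop]
        (fun x : ℝ => x ^ t * Real.exp (-(c₁ / (2 * c₄)) * x ^ ((2:ℝ)/3))) := by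
      filter_upwards [eventually_ge_atTop (0:ℝ)] with x hx
      rw [← Real.rpow_mul hx]
      congr 2
      ring
    have := (comp.congr' heq).const_mul c₄
    simpa using this
  have hg' : ∀ᶠ n : ℕ in atTop,
      c₄ * ((n:ℝ) ^ t * Real.exp (-(c₁ / (2 * c₄)) * (n:ℝ) ^ ((2:ℝ)/3))) < 1 :=
    tendsto_natCast_atTop_atTop.eventually (hg.eventually_lt_const one_pos)
  have hev : ∀ᶠ n : ℕ in atTop,
      (M n : ℝ) * (n : ℝ) ^ K *
        Real.exp (-(c₁ / (M n : ℝ)) * ((n - K + 1 : ℕ) : ℝ)) ≤ 1 / (n:ℝ)^2 := by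
    filter_upwards [eventually_ge_atTop (2*K + 2), hg'] with n hn hgn
    set x : ℝ := (n : ℝ) with hx
    have hx2 : (2:ℝ) ≤ x := by
      have h0 : (2*K + 2 : ℝ) ≤ x := by rw [hx]; exact_mod_cast hn
      linarith [Nat.cast_nonneg (α := ℝ) K]
    have hxpos : (0:ℝ) < x := by linarith
    have hx1 : (1:ℝ) ≤ x := by linarith
    have hMle : (M n : ℝ) ≤ c₄ * x ^ ((1:ℝ)/3) := by
      have h1 := (hM n (by omega)).2
      have h2 : x ^ a ≤ x ^ ((1:ℝ)/3) :=
        Real.rpow_le_rpow_of_exponent_le hx1 (le_of_lt ha)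
      nlinarith
    have hMpos : (0:ℝ) < (M n : ℝ) := by
      have h1 := (hM n (by omega)).1
      have : (0:ℝ) < c₃ * x ^ a := by positivity
      linarith
    have hKx : (K:ℝ) ≤ x / 2 - 1 := by
      have h0 : (2*K + 2 : ℝ) ≤ x := by rw [hx]; exact_mod_cast hn
      linarith
    have hjge : x / 2 ≤ ((n - K + 1 : ℕ) : ℝ) := by
      have hsub : ((n - K + 1 : ℕ) : ℝ) = x - K + 1 := by
        have hKn' : K ≤ n := by omega
        rw [hx]
        push_cast [hKn']
        ring
      rw [hsub]; linarith
    have hx13pos : (0:ℝ) < x ^ ((1:ℝ)/3) := Real.rpow_pos_of_pos hxpos _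
    have hxsplit : x ^ ((2:ℝ)/3) * x ^ ((1:ℝ)/3) = x := by
      rw [← Real.rpow_add hxpos]
      norm_num
    -- exponent inequality
    have hexp : (c₁ / (2*c₄)) * x ^ ((2:ℝ)/3) ≤ (c₁ / (M n : ℝ)) * ((n - K + 1 : ℕ) : ℝ) := by
      have h1 : (c₁ / (c₄ * x ^ ((1:ℝ)/3))) * (x/2) ≤ (c₁ / (M n : ℝ)) * ((n - K + 1 : ℕ) : ℝ) := by
        have hd : c₁ / (c₄ * x ^ ((1:ℝ)/3)) ≤ c₁ / (M n : ℝ) :=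
          div_le_div_of_nonneg_left (le_of_lt hc₁) hMpos hMle
        have hd0 : (0:ℝ) ≤ c₁ / (c₄ * x ^ ((1:ℝ)/3)) := by positivity
        have hj0 : (0:ℝ) ≤ x / 2 := by linarith
        exact mul_le_mul hd hjge hj0 (by positivity)
      have h2 : (c₁ / (2*c₄)) * x ^ ((2:ℝ)/3) = (c₁ / (c₄ * x ^ ((1:ℝ)/3))) * (x/2) := by
        rw [div_mul_eq_mul_div, div_mul_eq_mul_div,
          div_eq_div_iff (by linarith) (by positivity)]
        linear_combination c₁ * c₄ * hxsplit
      linarith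
    have hexple : Real.exp (-(c₁ / (M n : ℝ)) * ((n - K + 1 : ℕ) : ℝ)) ≤
        Real.exp (-(c₁ / (2*c₄)) * x ^ ((2:ℝ)/3)) := by
      apply Real.exp_le_exp.mpr
      nlinarith
    rw [le_div_iff₀ (by positivity)]
    have hpowt : x ^ ((1:ℝ)/3) * x ^ (K:ℕ) * x ^ (2:ℕ) = x ^ t := by
      rw [ht, ← Real.rpow_natCast x K, ← Real.rpow_natCast x 2,
        ← Real.rpow_add hxpos, ← Real.rpow_add hxpos]
      norm_num
    calc (M n : ℝ) * x ^ K * Real.exp (-(c₁ / (M n : ℝ)) * ((n - K + 1 : ℕ) : ℝ)) * x ^ 2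
        ≤ (c₄ * x ^ ((1:ℝ)/3)) * x ^ K * Real.exp (-(c₁ / (2*c₄)) * x ^ ((2:ℝ)/3)) * x ^ 2 := by
          have e1 : (0:ℝ) < Real.exp (-(c₁ / (M n : ℝ)) * ((n - K + 1 : ℕ) : ℝ)) :=
            Real.exp_pos _
          have e2 : (0:ℝ) ≤ x ^ K := by positivity
          have e3 : (0:ℝ) ≤ x ^ 2 := by positivity
          apply mul_le_mul_of_nonneg_right _ e3
          apply mul_le_mul (mul_le_mul_of_nonneg_right hMle e2) hexple (le_of_lt e1)
          positivity
      _ = c₄ * (x ^ t * Real.exp (-(c₁ / (2*c₄)) * x ^ ((2:ℝ)/3))) := by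
          rw [← hpowt]; ring
      _ ≤ 1 := le_of_lt hgn
  -- summability
  obtain ⟨N, hN⟩ := (hev.and (eventually_ge_atTop K)).exists_forall_of_atTop
  have hfinal : ∀ n, N ≤ n → μ (s n) ≤ ENNReal.ofReal (1 / (n:ℝ)^2) := by
    intro n hn
    exact (hsn n (hN n hn).2).trans (ENNReal.ofReal_le_ofReal (hN n hn).1)
  have hsum : (∑' n, μ (s n)) ≠ ∞ := by
    have hle : ∀ n, μ (s n) ≤ (if n < N then 1 else 0) + ENNReal.ofReal (1 / (n:ℝ)^2) := by
      intro n
      by_cases h : n < N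
      · simp only [h, if_true]
        exact le_add_right prob_le_one
      · simp only [h, if_false, zero_add]
        exact hfinal n (by omega)
    have hS : Summable (fun n : ℕ => 1 / (n:ℝ)^2) :=
      Real.summable_one_div_nat_pow.mpr one_lt_two
    have h2 : (∑' n : ℕ, ENNReal.ofReal (1 / (n:ℝ)^2)) =
        ENNReal.ofReal (∑' n : ℕ, 1 / (n:ℝ)^2) :=
      (ENNReal.ofReal_tsum_of_nonneg (fun n => by positivity) hS).symm
    have h1 : (∑' n : ℕ, (if n < N then (1:ℝ≥0∞) else 0)) =
        ∑ n ∈ Finset.range N, (if n < N then (1:ℝ≥0∞) else 0) := by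
      apply tsum_eq_sum
      intro n hn
      simp [Finset.mem_range] at hn
      simp [hn]
    have step1 : (∑' n, μ (s n)) ≤
        ∑' n : ℕ, ((if n < N then (1:ℝ≥0∞) else 0) + ENNReal.ofReal (1 / (n:ℝ)^2)) :=
      ENNReal.tsum_le_tsum hle
    have step2 : (∑' n : ℕ, ((if n < N then (1:ℝ≥0∞) else 0) + ENNReal.ofReal (1 / (n:ℝ)^2))) =
        (∑' n : ℕ, (if n < N then (1:ℝ≥0∞) else 0)) +
          ∑' n : ℕ, ENNReal.ofReal (1 / (n:ℝ)^2) := ENNReal.tsum_add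
    have step3 : (∑' n : ℕ, (if n < N then (1:ℝ≥0∞) else 0)) +
        (∑' n : ℕ, ENNReal.ofReal (1 / (n:ℝ)^2)) < ⊤ := by
      rw [h1, h2]
      apply ENNReal.add_lt_top.mpr
      constructor
      · exact ENNReal.sum_lt_top.mpr fun n _ => by split <;> simp
      · exact ENNReal.ofReal_lt_top
    exact (step1.trans_lt (step2.trans_lt step3)).ne
  filter_upwards [ae_eventually_notMem hsum] with ω hω
  refine hω.mono fun n hn m hm => ?_
  by_contra hlt
  push_neg at hlt
  exact hn (Set.mem_iUnion₂.mpr ⟨m, Finset.mem_range.mpr hm, hlt⟩)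
end
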